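/- Boundedness of the cube under the flow: if s ∈ [-1, 1]^N with s_l = 1 for some l, then the l-th component of the vector field, ds_l/dt = ∑_m 2 a_m c_{ml} K_{ml}(s) K_m(s), is ≤ 0; symmetrically if s_l = -1 then ds_l/dt ≥ 0. Hence the cube [-1,1]^N is forward invariant for the spin dynamics. -/
import Mathlib


open Finset in
/-- Forward invariance of the cube: on `[-1,1]^N`, if `s_l = 1` the `l`-th component of
the vector field is `≤ 0`, and if `s_l = -1` it is `≥ 0`. -/
theorem stmt_16 (N M k : ℕ) (c : Fin M → Fin N → ℝ) (a : Fin M → ℝ)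
    (ha : ∀ m, 0 < a m) (hc : ∀ m p, c m p ∈ ({-1, 0, 1} : Set ℝ))
    (s : Fin N → ℝ) (hs : ∀ p, s p ∈ Set.Icc (-1 : ℝ) 1) (l : Fin N) :
    (s l = 1 →
      ∑ m, 2 * a m * c m l *
          ((2 : ℝ) ^ (-(k : ℤ)) * ∏ p ∈ Finset.univ.erase l, (1 - c m p * s p)) *
          ((2 : ℝ) ^ (-(k : ℤ)) * ∏ p, (1 - c m p * s p)) ≤ 0) ∧
    (s l = -1 →
      0 ≤ ∑ m, 2 * a m * c m l *
          ((2 : ℝ) ^ (-(k : ℤ)) * ∏ p ∈ Finset.univ.erase l, (1 - c m p * s p)) *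
          ((2 : ℝ) ^ (-(k : ℤ)) * ∏ p, (1 - c m p * s p))) := by
  have hfac : ∀ m p, 0 ≤ 1 - c m p * s p := by
    intro m p
    have hsp := hs p
    have h := hc m p; simp only [Set.mem_insert_iff, Set.mem_singleton_iff] at h; rcases h with h | h | h <;>
      rw [h] <;> nlinarith [hsp.1, hsp.2]
  have hprodE : ∀ m, 0 ≤ ∏ p ∈ Finset.univ.erase l, (1 - c m p * s p) := fun m =>
    Finset.prod_nonneg fun p _ => hfac m p
  have hprodU : ∀ m, 0 ≤ ∏ p, (1 - c m p * s p) := fun m =>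
    Finset.prod_nonneg fun p _ => hfac m p
  have hpow : (0 : ℝ) ≤ (2 : ℝ) ^ (-(k : ℤ)) := by positivity
  constructor
  · intro hsl
    apply Finset.sum_nonpos
    intro m _
    have h := hc m l; simp only [Set.mem_insert_iff, Set.mem_singleton_iff] at h; rcases h with h | h | h
    · rw [h]
      have h1 : (0:ℝ) ≤ (2 : ℝ) ^ (-(k : ℤ)) * ∏ p ∈ Finset.univ.erase l, (1 - c m p * s p) :=
        mul_nonneg hpow (hprodE m)
      have h2 : (0:ℝ) ≤ (2 : ℝ) ^ (-(k : ℤ)) * ∏ p, (1 - c m p * s p) :=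
        mul_nonneg hpow (hprodU m)
      nlinarith [(ha m).le, mul_nonneg h1 h2, mul_nonneg (mul_nonneg (ha m).le h1) h2]
    · rw [h]; ring_nf; simp
    · have : (∏ p, (1 - c m p * s p)) = 0 :=
        Finset.prod_eq_zero (Finset.mem_univ l) (by rw [h, hsl]; ring)
      rw [this]; ring_nf; simp
  · intro hsl
    apply Finset.sum_nonneg
    intro m _
    have h := hc m l; simp only [Set.mem_insert_iff, Set.mem_singleton_iff] at h; rcases h with h | h | h
    · have : (∏ p, (1 - c m p * s p)) = 0 :=
        Finset.prod_eq_zero (Finset.mem_univ l) (by rw [h, hsl]; ring)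
      rw [this]; ring_nf; simp
    · rw [h]; ring_nf; simp
    · rw [h]
      have h1 : (0:ℝ) ≤ (2 : ℝ) ^ (-(k : ℤ)) * ∏ p ∈ Finset.univ.erase l, (1 - c m p * s p) :=
        mul_nonneg hpow (hprodE m)
      have h2 : (0:ℝ) ≤ (2 : ℝ) ^ (-(k : ℤ)) * ∏ p, (1 - c m p * s p) :=
        mul_nonneg hpow (hprodU m)
      nlinarith [(ha m).le, mul_nonneg (mul_nonneg (ha m).le h1) h2]
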